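/- Let (C_{ij})_{1≤i,j≤ℓ} be a Cartan matrix of finite type with symmetrizers r_i, and define C_{ij}(x) = (x^{r_i}+x^{−r_i})δ_{ij} − [I_{ij}]_x in ℤ[x,x^{−1}], where I = 2·Id − C. Fix i ∈ {1,…,ℓ}. Suppose R_1(x),…,R_ℓ(x) ∈ ℤ[x,x^{−1}] all have nonnegative coefficients, and suppose that for every j ∈ {1,…,ℓ} the Laurent polynomial δ_{ij} − ∑_{k=1}^{ℓ} C_{jk}(x) R_k(x) has nonnegative coefficients. Then R_k(x) = 0 for all k. -/

import Mathlib

/-- The `q`-integer `[n]_x = (x^n − x^{−n})/(x − x^{−1}) = x^{n−1} + x^{n−3} + ⋯ + x^{−n+1}`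
as a Laurent polynomial over `ℤ`, for `n ∈ ℤ` (with `[−n]_x = −[n]_x`). -/
noncomputable def lqint (n : ℤ) : LaurentPolynomial ℤ :=
  if 0 ≤ n then ∑ k ∈ Finset.range n.toNat, LaurentPolynomial.T (n - 1 - 2 * k)
  else -∑ k ∈ Finset.range (-n).toNat, LaurentPolynomial.T (-n - 1 - 2 * k)

/-- The coefficients of a Laurent polynomial over `ℤ` (a Laurent polynomial is,
definitionally, a finitely supported function `ℤ →₀ ℤ` on exponents). -/
def lcoeff (p : LaurentPolynomial ℤ) : ℤ →₀ ℤ := p.coeff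

namespace Stmt7
open LaurentPolynomial Finset Matrix

lemma lcoeff_apply (p : LaurentPolynomial ℤ) (n : ℤ) : lcoeff p n = p.coeff n := rfl

lemma lcoeff_zero (n : ℤ) : lcoeff (0 : LaurentPolynomial ℤ) n = 0 := by simp [lcoeff]

lemma lcoeff_sub (p q : LaurentPolynomial ℤ) (n : ℤ) :
    lcoeff (p - q) n = lcoeff p n - lcoeff q n := by
  simp only [lcoeff, AddMonoidAlgebra.coeff_sub, Finsupp.sub_apply]

lemma lcoeff_add (p q : LaurentPolynomial ℤ) (n : ℤ) :
    lcoeff (p + q) n = lcoeff p n + lcoeff q n := by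
  simp only [lcoeff, AddMonoidAlgebra.coeff_add, Finsupp.add_apply]

lemma lcoeff_neg (p : LaurentPolynomial ℤ) (n : ℤ) :
    lcoeff (-p) n = -lcoeff p n := by
  simp only [lcoeff, AddMonoidAlgebra.coeff_neg, Finsupp.neg_apply]

lemma lcoeff_sum {α : Type*} (s : Finset α) (f : α → LaurentPolynomial ℤ) (n : ℤ) :
    lcoeff (∑ k ∈ s, f k) n = ∑ k ∈ s, lcoeff (f k) n := by
  simp only [lcoeff, AddMonoidAlgebra.coeff_sum, Finsupp.finset_sum_apply]

lemma lcoeff_one (n : ℤ) : lcoeff (1 : LaurentPolynomial ℤ) n = if 0 = n then 1 else 0 := by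
  rw [← T_zero (R := ℤ)]; exact T_apply n 0

lemma lcoeff_T_mul (m : ℤ) (p : LaurentPolynomial ℤ) (n : ℤ) :
    lcoeff (T m * p) n = lcoeff p (n - m) := by
  have hT : (T m : LaurentPolynomial ℤ) = AddMonoidAlgebra.single m 1 := rfl
  rw [lcoeff_apply, lcoeff_apply, hT, AddMonoidAlgebra.coeff_single_mul_apply, one_mul,
    neg_add_eq_sub]

lemma lcoeff_ne_zero {p : LaurentPolynomial ℤ} {n : ℤ} (h : lcoeff p n ≠ 0) : p ≠ 0 := by
  intro hp; exact h (by rw [hp]; exact lcoeff_zero n)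

/-- top degree -/
noncomputable def tdeg (p : LaurentPolynomial ℤ) : ℤ := WithBot.unbotD 0 ((lcoeff p).support.max)

lemma support_nonempty {p : LaurentPolynomial ℤ} (hp : p ≠ 0) : (lcoeff p).support.Nonempty := by
  rw [Finsupp.support_nonempty_iff]; exact fun h => hp (AddMonoidAlgebra.coeff_eq_zero.mp h)

lemma tdeg_eq_max' {p : LaurentPolynomial ℤ} (hp : p ≠ 0) :
    tdeg p = (lcoeff p).support.max' (support_nonempty hp) := by
  rw [tdeg, ← Finset.coe_max' (support_nonempty hp)]; rfl

lemma tdeg_coeff_ne_zero {p : LaurentPolynomial ℤ} (hp : p ≠ 0) : lcoeff p (tdeg p) ≠ 0 := by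
  rw [tdeg_eq_max' hp, ← Finsupp.mem_support_iff]
  exact Finset.max'_mem _ _

lemma le_tdeg {p : LaurentPolynomial ℤ} {n : ℤ} (h : lcoeff p n ≠ 0) : n ≤ tdeg p := by
  rw [tdeg_eq_max' (lcoeff_ne_zero h)]
  exact Finset.le_max' _ _ (Finsupp.mem_support_iff.mpr h)

lemma coeff_eq_zero_of_tdeg_lt {p : LaurentPolynomial ℤ} {n : ℤ} (h : tdeg p < n) :
    lcoeff p n = 0 := by
  by_contra hc; exact absurd (le_tdeg hc) (not_le.mpr h)

lemma lqint_zero : lqint 0 = 0 := by simp [lqint]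

lemma lqint_nonneg (m : ℤ) (hm : 0 ≤ m) :
    lqint m = ∑ k ∈ Finset.range m.toNat, LaurentPolynomial.T (m - 1 - 2 * k) := by
  rw [lqint, if_pos hm]

lemma invert_lqint (m : ℤ) : LaurentPolynomial.invert (lqint m) = lqint m := by
  have key : ∀ a : ℤ, 0 ≤ a →
      LaurentPolynomial.invert (∑ k ∈ Finset.range a.toNat, (T (a - 1 - 2 * k) : LaurentPolynomial ℤ))
        = ∑ k ∈ Finset.range a.toNat, (T (a - 1 - 2 * k) : LaurentPolynomial ℤ) := by
    intro a ha
    rw [map_sum]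
    simp only [invert_T]
    rw [← Finset.sum_range_reflect (fun k => (T (a - 1 - 2 * k) : LaurentPolynomial ℤ)) a.toNat]
    apply Finset.sum_congr rfl
    intro k hk
    rw [Finset.mem_range] at hk
    congr 1
    have hcast : ((a.toNat : ℤ)) = a := Int.toNat_of_nonneg ha
    have : ((a.toNat - 1 - k : ℕ) : ℤ) = a - 1 - k := by
      omega
    rw [this]; ring
  rw [lqint]
  split_ifs with h
  · exact key _ h
  · rw [map_neg, key _ (by omega)]

lemma key (ℓ : ℕ) (C : Matrix (Fin ℓ) (Fin ℓ) ℤ) (r : Fin ℓ → ℤ)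
    (hdiag : ∀ i, C i i = 2)
    (hoff : ∀ i j, i ≠ j → C i j ≤ 0)
    (hrpos : ∀ i, 0 < r i)
    (hIle : ∀ j k, j ≠ k → -C j k ≤ r k)
    (i : Fin ℓ) (R : Fin ℓ → LaurentPolynomial ℤ)
    (hR : ∀ k, ∀ n : ℤ, 0 ≤ lcoeff (R k) n)
    (hker : ∀ j, ∀ n : ℤ, 0 ≤ lcoeff
      ((if i = j then 1 else 0) -
        ∑ k, ((if j = k then LaurentPolynomial.T (r j) + LaurentPolynomial.T (-(r j)) else 0)
            - lqint (2 * (if j = k then 1 else 0) - C j k)) * R k) n)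
    (hne : ∃ k, R k ≠ 0) : R i ≠ 0 ∧ tdeg (R i) + r i = 0 := by
  obtain ⟨k₀, hk₀⟩ := hne
  classical
  set S : Finset (Fin ℓ) := Finset.univ.filter (fun k => R k ≠ 0) with hSdef
  have hS : S.Nonempty := ⟨k₀, by simp [hSdef, hk₀]⟩
  set E : Finset ℤ := S.image (fun k => tdeg (R k) + r k) with hEdef
  have hE : E.Nonempty := hS.image _
  set d := E.max' hE with hd
  obtain ⟨j, hjS, hjd⟩ := Finset.mem_image.mp (E.max'_mem hE)
  have hRj : R j ≠ 0 := (Finset.mem_filter.mp hjS).2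
  have hmax : ∀ k, R k ≠ 0 → tdeg (R k) + r k ≤ d := by
    intro k hk
    have hmem : tdeg (R k) + r k ∈ E :=
      Finset.mem_image_of_mem _ (Finset.mem_filter.mpr ⟨Finset.mem_univ _, hk⟩)
    exact Finset.le_max' E _ hmem
  -- main computation
  have hsum : lcoeff (∑ k, ((if j = k then LaurentPolynomial.T (r j)
        + LaurentPolynomial.T (-(r j)) else 0)
      - lqint (2 * (if j = k then 1 else 0) - C j k)) * R k) d
      = lcoeff (R j) (tdeg (R j)) := by
    rw [lcoeff_sum]
    rw [Finset.sum_eq_single j]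
    · rw [if_pos rfl, if_pos rfl]
      have h0 : (2 * 1 - C j j : ℤ) = 0 := by rw [hdiag j]; ring
      rw [h0, lqint_zero, sub_zero, add_mul, lcoeff_add, lcoeff_T_mul, lcoeff_T_mul]
      have h1 : d - r j = tdeg (R j) := by omega
      have h2 : lcoeff (R j) (d - -(r j)) = 0 := by
        apply coeff_eq_zero_of_tdeg_lt
        have := hrpos j
        omega
      rw [h1, h2, add_zero]
    · intro k _ hkj
      have hjk : j ≠ k := hkj.symm
      rw [if_neg hjk, if_neg hjk]
      have hI0 : (0:ℤ) ≤ 2 * 0 - C j k := by have := hoff j k hjk; omega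
      rw [zero_sub, neg_mul, lcoeff_neg, neg_eq_zero]
      rw [lqint_nonneg _ hI0, Finset.sum_mul, lcoeff_sum]
      apply Finset.sum_eq_zero
      intro t _
      rw [lcoeff_T_mul]
      by_cases hk : R k = 0
      · rw [hk]; exact lcoeff_zero _
      · apply coeff_eq_zero_of_tdeg_lt
        have h1 : tdeg (R k) + r k ≤ d := hmax k hk
        have h2 : -C j k ≤ r k := hIle j k hjk
        have h3 : (0:ℤ) ≤ (t:ℤ) := Int.natCast_nonneg t
        omega
    · intro h; exact absurd (Finset.mem_univ j) h
  have hpos : 0 < lcoeff (R j) (tdeg (R j)) :=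
    lt_of_le_of_ne (hR j _) (Ne.symm (tdeg_coeff_ne_zero hRj))
  have h := hker j d
  rw [lcoeff_sub, hsum, apply_ite (fun p => lcoeff p d), lcoeff_zero, lcoeff_one] at h
  split_ifs at h with hij hd0
  · refine ⟨by rw [hij]; exact hRj, ?_⟩
    rw [hij, hjd]
    omega
  · omega
  · omega

lemma cartan_Ile (ℓ : ℕ) (C : Matrix (Fin ℓ) (Fin ℓ) ℤ) (r : Fin ℓ → ℤ)
    (hdiag : ∀ i, C i i = 2) (hoff : ∀ i j, i ≠ j → C i j ≤ 0) (hrpos : ∀ i, 0 < r i)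
    (hsym : ∀ i j, r i * C i j = r j * C j i)
    (hmin : ∀ i j, i ≠ j → min (r i) (2 * (if i = j then 1 else 0) - C i j) ≤ 1)
    (hposdef : (Matrix.of fun i j => ((r i * C i j : ℤ) : ℝ)).PosDef) :
    ∀ j k, j ≠ k → -C j k ≤ r k := by
  intro j k hjk
  by_contra hlt
  push_neg at hlt
  have hrj : r j = 1 := by
    have h1 := hmin j k hjk
    rw [if_neg hjk] at h1
    have := hrpos j; have := hrpos k
    omega
  have hCjk : C j k = r k * C k j := by
    have := hsym j k; rw [hrj] at this; omega
  have hckj0 : C k j ≤ 0 := hoff k j hjk.symm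
  have hcases : C k j = 0 ∨ C k j = -1 ∨ C k j ≤ -2 := by omega
  have hrk0 := hrpos k
  rcases hcases with h | h | h
  · rw [h, mul_zero] at hCjk; omega
  · rw [h] at hCjk; omega
  · -- C k j ≤ -2, hence r k = 1 and C j k = C k j ≤ -2
    have hrk : r k = 1 := by
      have h1 := hmin k j hjk.symm
      rw [if_neg hjk.symm] at h1
      omega
    have hcc : C j k = C k j := by rw [hCjk, hrk, one_mul]
    set M := Matrix.of fun i j => ((r i * C i j : ℤ) : ℝ) with hM
    set v : Fin ℓ → ℝ := Pi.single j 1 + Pi.single k 1 with hv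
    have hvne : v ≠ 0 := by
      intro hz
      have h0 := congrFun hz j
      rw [hv] at h0
      simp [Pi.single_apply, hjk] at h0
    have hq := hposdef.dotProduct_mulVec_pos hvne
    have hstar : star v = v := star_trivial v
    rw [hstar] at hq
    have hmv : M *ᵥ v = (fun m => M m j * 1) + (fun m => M m k * 1) := by
      rw [hv, Matrix.mulVec_add, Matrix.mulVec_single, Matrix.mulVec_single]
      ext m; simp
    rw [hmv, hv, add_dotProduct, single_dotProduct,
      single_dotProduct] at hq
    simp only [Pi.add_apply] at hq
    have hR : (0:ℝ) < ((r j * C j j + r j * C j k + (r k * C k j + r k * C k k) : ℤ) : ℝ) := by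
      convert hq using 1
      push_cast
      rfl
      simp only [hM, Matrix.of_apply]
      push_cast
      ring
    have hZ : (0:ℤ) < r j * C j j + r j * C j k + (r k * C k j + r k * C k k) := by
      exact_mod_cast hR
    rw [hrj, hrk, hdiag j, hdiag k, hcc] at hZ
    omega

end Stmt7

/-- let `C` be a Cartan matrix of finite type (diagonal `2`,
nonpositive off-diagonal entries, symmetrizers `r_i ≥ 1` with `r_i C_{ij}` symmetric and
positive definite, and `min(r_i, I_{ij}) ≤ 1` for `i ≠ j`, where `I = 2·Id − C`), and set
`C_{jk}(x) = (x^{r_j} + x^{−r_j})δ_{jk} − [I_{jk}]_x`.  Fix `i`.  If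
`R_1(x), …, R_ℓ(x) ∈ ℤ[x,x^{−1}]` have nonnegative coefficients and, for every `j`,
`δ_{ij} − ∑_k C_{jk}(x) R_k(x)` has nonnegative coefficients, then all `R_k = 0`. -/
theorem stmt_7 (ℓ : ℕ) (C : Matrix (Fin ℓ) (Fin ℓ) ℤ) (r : Fin ℓ → ℤ)
    (hdiag : ∀ i, C i i = 2)
    (hoff : ∀ i j, i ≠ j → C i j ≤ 0)
    (hrpos : ∀ i, 0 < r i)
    (hsym : ∀ i j, r i * C i j = r j * C j i)
    (hmin : ∀ i j, i ≠ j → min (r i) (2 * (if i = j then 1 else 0) - C i j) ≤ 1)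
    (hposdef : (Matrix.of fun i j => ((r i * C i j : ℤ) : ℝ)).PosDef)
    (i : Fin ℓ) (R : Fin ℓ → LaurentPolynomial ℤ)
    (hR : ∀ k, ∀ n : ℤ, 0 ≤ lcoeff (R k) n)
    (hker : ∀ j, ∀ n : ℤ, 0 ≤ lcoeff
      ((if i = j then 1 else 0) -
        ∑ k, ((if j = k then LaurentPolynomial.T (r j) + LaurentPolynomial.T (-(r j)) else 0)
            - lqint (2 * (if j = k then 1 else 0) - C j k)) * R k) n) :
    ∀ k, R k = 0 := by
  open LaurentPolynomial Stmt7 in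
  intro k
  by_contra hk
  have hIle := Stmt7.cartan_Ile ℓ C r hdiag hoff hrpos hsym hmin hposdef
  have h1 := Stmt7.key ℓ C r hdiag hoff hrpos hIle i R hR hker ⟨k, hk⟩
  set R' : Fin ℓ → LaurentPolynomial ℤ := fun k => LaurentPolynomial.invert (R k) with hR'def
  have hinv_coeff : ∀ (p : LaurentPolynomial ℤ) (n : ℤ),
      lcoeff (LaurentPolynomial.invert p) n = lcoeff p (-n) := fun p n => LaurentPolynomial.invert_apply p n
  have hR' : ∀ k, ∀ n : ℤ, 0 ≤ lcoeff (R' k) n := by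
    intro k n
    rw [hR'def]
    exact le_of_le_of_eq (hR k (-n)) (hinv_coeff (R k) n).symm
  have hker' : ∀ j, ∀ n : ℤ, 0 ≤ lcoeff
      ((if i = j then 1 else 0) -
        ∑ k, ((if j = k then LaurentPolynomial.T (r j) + LaurentPolynomial.T (-(r j)) else 0)
            - lqint (2 * (if j = k then 1 else 0) - C j k)) * R' k) n := by
    intro j n
    have hE : ((if i = j then (1 : LaurentPolynomial ℤ) else 0) -
        ∑ k, ((if j = k then LaurentPolynomial.T (r j) + LaurentPolynomial.T (-(r j)) else 0)
            - lqint (2 * (if j = k then 1 else 0) - C j k)) * R' k)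
        = LaurentPolynomial.invert ((if i = j then 1 else 0) -
        ∑ k, ((if j = k then LaurentPolynomial.T (r j) + LaurentPolynomial.T (-(r j)) else 0)
            - lqint (2 * (if j = k then 1 else 0) - C j k)) * R k) := by
      rw [map_sub, map_sum]
      congr 1
      · split_ifs
        · exact (map_one _).symm
        · exact (map_zero _).symm
      · apply Finset.sum_congr rfl
        intro m _
        rw [map_mul, map_sub]
        congr 2
        · split_ifs
          · rw [map_add, LaurentPolynomial.invert_T, LaurentPolynomial.invert_T, neg_neg,
              add_comm]
          · exact (map_zero _).symm
        · exact (Stmt7.invert_lqint _).symm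
    rw [hE, hinv_coeff]
    exact hker j (-n)
  have hne' : ∃ m, R' m ≠ 0 := by
    refine ⟨k, fun hz => hk ?_⟩
    have h2 : LaurentPolynomial.invert (LaurentPolynomial.invert (R k))
        = LaurentPolynomial.invert 0 := congrArg _ hz
    rwa [LaurentPolynomial.involutive_invert (R k), map_zero] at h2
  have h2 := Stmt7.key ℓ C r hdiag hoff hrpos hIle i R' hR' hker' hne'
  have hc : lcoeff (R' i) (-(Stmt7.tdeg (R i))) ≠ 0 := by
    rw [hR'def]
    show lcoeff (LaurentPolynomial.invert (R i)) _ ≠ 0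
    rw [hinv_coeff, neg_neg]
    exact Stmt7.tdeg_coeff_ne_zero h1.1
  have hle := Stmt7.le_tdeg hc
  have hri := hrpos i
  have e1 := h1.2
  have e2 := h2.2
  omega
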